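/- (Kolmogorov–Arnold representation theorem.) Let n ≥ 1 and let f : [0,1]ⁿ → ℝ be continuous. Then there exist continuous functions Φ_q : ℝ → ℝ for q = 0, 1, …, 2n and continuous functions φ_{q,p} : [0,1] → ℝ for q = 0, 1, …, 2n and p = 1, …, n such that for every x = (x₁, …, xₙ) ∈ [0,1]ⁿ, f(x₁, …, xₙ) = Σ_{q=0}^{2n} Φ_q( Σ_{p=1}^{n} φ_{q,p}(x_p) ). -/

import Mathlib

open BigOperators

open BigOperators Set

set_option maxHeartbeats 1000000

namespace KA

noncomputable section

/-- clamp to `[0,1]` -/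
def c01 (t : ℝ) : ℝ := max 0 (min 1 t)

lemma c01_cont : Continuous c01 := by unfold c01; fun_prop

lemma c01_of_nonpos {t : ℝ} (h : t ≤ 0) : c01 t = 0 := by
  unfold c01; rw [max_eq_left]; exact le_trans (min_le_right _ _) h

lemma c01_of_one_le {t : ℝ} (h : 1 ≤ t) : c01 t = 1 := by
  unfold c01; rw [min_eq_left h, max_eq_right]; norm_num

lemma c01_nonneg (t : ℝ) : 0 ≤ c01 t := le_max_left _ _

lemma c01_le_one (t : ℝ) : c01 t ≤ 1 := max_le (by norm_num) (min_le_left _ _)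

lemma c01_mem (t : ℝ) : c01 t ∈ Icc (0:ℝ) 1 := ⟨c01_nonneg t, c01_le_one t⟩

lemma c01_of_mem {t : ℝ} (h : t ∈ Icc (0:ℝ) 1) : c01 t = t := by
  unfold c01; rw [min_eq_right h.2, max_eq_right h.1]

/-! ### The grid -/

/-- slot width at stage with `m` cells, for dimension `n` -/
def ee (n m : ℕ) : ℝ := 1 / (m * (4*n+2))

/-- cell width -/
def cc (m : ℕ) : ℝ := 1 / m

variable {n m q j : ℕ}

lemma ee_pos (hm : 1 ≤ m) : 0 < ee n m := by
  have : (0:ℝ) < m := by exact_mod_cast hm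
  unfold ee; positivity

lemma cc_pos (hm : 1 ≤ m) : 0 < cc m := by
  have : (0:ℝ) < m := by exact_mod_cast hm
  unfold cc; positivity

lemma cc_eq (hm : 1 ≤ m) : cc m = (4*n+2) * ee n m := by
  have h : (0:ℝ) < m := by exact_mod_cast hm
  unfold cc ee; field_simp

/-- left endpoint of good interval `A n m q j` -/
def lA (n m q j : ℕ) : ℝ := max 0 ((j:ℝ) * cc m - cc m + (2*q+1) * ee n m)

/-- right endpoint -/
def rA (n m q j : ℕ) : ℝ := min 1 ((j:ℝ) * cc m + 2*q * ee n m)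

lemma le_lA : (j:ℝ)*cc m - cc m + (2*(q:ℝ)+1)*ee n m ≤ lA n m q j := le_max_right _ _

lemma rA_le : rA n m q j ≤ (j:ℝ)*cc m + 2*(q:ℝ)*ee n m := min_le_right _ _

/-- `x` is in the `q`-th gap system at this stage -/
def bad (n m q : ℕ) (x : ℝ) : Prop :=
  ∃ j < m, (j:ℝ)*cc m + 2*q*ee n m ≤ x ∧ x ≤ (j:ℝ)*cc m + (2*q+1)*ee n m

lemma slot_le (hm : 1 ≤ m) (hq : q ≤ 2*n) :
    (2*(q:ℝ)+1) * ee n m ≤ cc m - ee n m := by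
  rw [cc_eq (n := n) hm]
  have he := ee_pos (n := n) hm
  have : (2*(q:ℝ)+1) ≤ 4*n+1 := by
    have : (q:ℝ) ≤ 2*n := by exact_mod_cast hq
    linarith
  nlinarith

lemma lA_nonneg : 0 ≤ lA n m q j := le_max_left _ _

lemma rA_le_one : rA n m q j ≤ 1 := min_le_left _ _

lemma lA_le_rA (hm : 1 ≤ m) (hq : q ≤ 2*n) (hj : j ≤ m) : lA n m q j ≤ rA n m q j := by
  have he := ee_pos (n := n) hm
  have hs := slot_le (n := n) hm hq
  have hc := cc_pos hm
  have hcm : (m:ℝ) * cc m = 1 := by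
    have : (0:ℝ) < m := by exact_mod_cast hm
    unfold cc; field_simp
  have hjm : (j:ℝ) ≤ m := by exact_mod_cast hj
  apply max_le
  · apply le_min (by norm_num)
    positivity
  · apply le_min
    · nlinarith
    · nlinarith

lemma rA_sub_lA_le (hm : 1 ≤ m) : rA n m q j - lA n m q j ≤ cc m := by
  have he := ee_pos (n := n) hm
  have h1 : rA n m q j ≤ (j:ℝ) * cc m + 2*q * ee n m := min_le_right _ _
  have h2 : (j:ℝ) * cc m - cc m + (2*q+1) * ee n m ≤ lA n m q j := le_max_right _ _
  nlinarith

lemma lA_mem (hm : 1 ≤ m) (hq : q ≤ 2*n) (hj : j ≤ m) : lA n m q j ∈ Icc (0:ℝ) 1 :=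
  ⟨lA_nonneg, le_trans (lA_le_rA hm hq hj) rA_le_one⟩

/-- covering: a point of `[0,1]` not in the `q`-gap system lies in some good interval. -/
lemma cover (hm : 1 ≤ m) (hq : q ≤ 2*n) {x : ℝ} (hx : x ∈ Icc (0:ℝ) 1)
    (hb : ¬ bad n m q x) : ∃ j ≤ m, x ∈ Icc (lA n m q j) (rA n m q j) := by
  have he := ee_pos (n := n) hm
  have hc := cc_pos hm
  have hmR : (0:ℝ) < m := by exact_mod_cast hm
  have hcm : (m:ℝ) * cc m = 1 := by unfold cc; field_simp
  have hs := slot_le (n := n) hm hq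
  rcases eq_or_lt_of_le hx.2 with h1 | h1
  · refine ⟨m, le_rfl, ?_, ?_⟩
    · apply max_le
      · linarith [hx.1]
      · nlinarith
    · apply le_min (le_of_eq h1)
      nlinarith
  · set j0 := Nat.floor (x * m) with hj0
    have hxm0 : 0 ≤ x * m := by nlinarith [hx.1]
    have h0 : (j0:ℝ) ≤ x * m := Nat.floor_le hxm0
    have h1' : x * m < (j0:ℝ) + 1 := Nat.lt_floor_add_one _
    have hj0m : j0 < m := by
      rw [hj0]
      rw [Nat.floor_lt hxm0]
      push_cast
      nlinarith
    have hj0c : (j0:ℝ) * cc m ≤ x := by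
      have : (j0:ℝ) * cc m * m ≤ x * m := by nlinarith
      nlinarith
    have hxj1 : x < ((j0:ℝ) + 1) * cc m := by
      have : x * m < ((j0:ℝ)+1) * cc m * m := by nlinarith
      nlinarith
    unfold bad at hb
    push_neg at hb
    by_cases h : (j0:ℝ)*cc m + 2*q*ee n m ≤ x
    · have hgt := hb j0 hj0m h
      refine ⟨j0+1, hj0m, ?_, ?_⟩
      · apply max_le (hx.1)
        push_cast
        nlinarith
      · apply le_min hx.2
        push_cast
        nlinarith
    · push_neg at h
      refine ⟨j0, le_of_lt hj0m, ?_, ?_⟩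
      · apply max_le (hx.1)
        nlinarith
      · exact le_min hx.2 (le_of_lt h)


/-- distinct gap systems are disjoint at each stage -/
lemma bad_disj (hm : 1 ≤ m) {q q' : ℕ} (hq : q ≤ 2*n) (hq' : q' ≤ 2*n) {x : ℝ}
    (h : bad n m q x) (h' : bad n m q' x) : q = q' := by
  obtain ⟨j, hj, hx1, hx2⟩ := h
  obtain ⟨j', hj', hy1, hy2⟩ := h'
  have he := ee_pos (n := n) hm
  have hc := cc_pos hm
  have hs := slot_le (n := n) hm hq
  have hs' := slot_le (n := n) hm hq'
  have hq0 : (0:ℝ) ≤ 2*(q:ℝ) := by positivity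
  have hq0' : (0:ℝ) ≤ 2*(q':ℝ) := by positivity
  have hjj : j = j' := by
    by_contra hne
    rcases Nat.lt_or_ge j j' with hl | hl
    · have hcast : (j:ℝ)+1 ≤ (j':ℝ) := by exact_mod_cast hl
      nlinarith
    · have hl' : j' < j := lt_of_le_of_ne hl (Ne.symm hne)
      have hcast : (j':ℝ)+1 ≤ (j:ℝ) := by exact_mod_cast hl'
      nlinarith
  subst hjj
  have h1 : (2*(q:ℝ)) ≤ 2*(q':ℝ)+1 := by nlinarith [le_trans hx1 hy2]
  have h2 : (2*(q':ℝ)) ≤ 2*(q:ℝ)+1 := by nlinarith [le_trans hy1 hx2]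
  have n1 : 2*q ≤ 2*q'+1 := by exact_mod_cast h1
  have n2 : 2*q' ≤ 2*q+1 := by exact_mod_cast h2
  omega

/-! ### digit uniqueness -/

lemma base_digits_inj {B : ℕ} (hB : 0 < B) :
    ∀ (k : ℕ) (c c' : Fin k → ℕ), (∀ p, c p < B) → (∀ p, c' p < B) →
    (∑ p, c p * B^(p:ℕ)) = (∑ p, c' p * B^(p:ℕ)) → c = c' := by
  intro k
  induction k with
  | zero => intro c c' _ _ _; funext p; exact p.elim0
  | succ k ih =>
    intro c c' hc hc' hsum
    rw [Fin.sum_univ_succ, Fin.sum_univ_succ] at hsum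
    have e1 : ∀ (d : Fin (k+1) → ℕ),
        (∑ p : Fin k, d p.succ * B^((p.succ : Fin (k+1)):ℕ)) = B * ∑ p : Fin k, d p.succ * B^(p:ℕ) := by
      intro d
      rw [Finset.mul_sum]
      apply Finset.sum_congr rfl
      intro p _
      rw [Fin.val_succ, pow_succ]
      ring
    rw [e1 c, e1 c'] at hsum
    simp only [Fin.val_zero, pow_zero, mul_one] at hsum
    have h0 : c 0 = c' 0 := by
      have := congrArg (· % B) hsum
      simpa [Nat.add_mul_mod_self_left, Nat.mod_eq_of_lt (hc 0), Nat.mod_eq_of_lt (hc' 0)] using this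
    have htail : (∑ p : Fin k, c p.succ * B^(p:ℕ)) = ∑ p : Fin k, c' p.succ * B^(p:ℕ) := by
      rw [h0] at hsum
      exact Nat.eq_of_mul_eq_mul_left hB (Nat.add_left_cancel hsum)
    have htl := ih (fun p => c p.succ) (fun p => c' p.succ) (fun p => hc _) (fun p => hc' _) htail
    funext p
    refine Fin.cases ?_ ?_ p
    · exact h0
    · intro i; exact congrFun htl i

lemma dig_inj (n m : ℕ) :
    Function.Injective (fun J : Fin n → Fin (m+1) => ∑ p : Fin n, 2^((p:ℕ)*(m+1) + (J p : ℕ))) := by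
  intro J J' h
  simp only at h
  have key : ∀ (K : Fin n → Fin (m+1)),
      (∑ p : Fin n, 2^((p:ℕ)*(m+1) + (K p:ℕ))) = ∑ p : Fin n, (2^(K p:ℕ)) * (2^(m+1))^(p:ℕ) := by
    intro K; apply Finset.sum_congr rfl; intro p _
    rw [← pow_mul, ← pow_add]
    ring_nf
  rw [key, key] at h
  have hJ := base_digits_inj (B := 2^(m+1)) (by positivity) n _ _
    (fun p => Nat.pow_lt_pow_right one_lt_two (J p).isLt)
    (fun p => Nat.pow_lt_pow_right one_lt_two (J' p).isLt) h
  funext p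
  have hp := congrFun hJ p
  exact Fin.ext (Nat.pow_right_injective le_rfl hp)

/-! ### one construction step for the inner functions -/

variable (n) in
/-- output data of one construction step -/
structure StepOut (ψ : Fin (2*n+1) → Fin n → ℝ → ℝ) (ε δ : ℝ) where
  m : ℕ
  hm : 1 ≤ m
  hmδ : (1:ℝ)/m ≤ δ
  F : Fin (2*n+1) → Fin n → ℝ → ℝ
  cont : ∀ q p, Continuous (F q p)
  clamp : ∀ q p x, F q p x = F q p (c01 x)
  pert : ∀ q p x, |F q p x - ψ q p x| ≤ ε
  v : Fin (2*n+1) → (Fin n → Fin (m+1)) → ℝ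
  hv : ∀ (q : Fin (2*n+1)) (J : Fin n → Fin (m+1)) (x : Fin n → ℝ),
        (∀ p, x p ∈ Icc (lA n m (q:ℕ) (J p : ℕ)) (rA n m (q:ℕ) (J p : ℕ))) →
        ∑ p, F q p (x p) = v q J
  hinj : ∀ q, Function.Injective (v q)

set_option maxHeartbeats 2000000 in
lemma step_exists (hn : 1 ≤ n) (ψ : Fin (2*n+1) → Fin n → ℝ → ℝ)
    (hc : ∀ q p, Continuous (ψ q p)) (hcl : ∀ q p x, ψ q p x = ψ q p (c01 x))
    {ε δ : ℝ} (hε : 0 < ε) (hδ : 0 < δ) : Nonempty (StepOut n ψ ε δ) := by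
  classical
  -- uniform continuity data
  have H : ∀ (q : Fin (2*n+1)) (p : Fin n), ∃ d > 0, ∀ x ∈ Icc (0:ℝ) 1, ∀ y ∈ Icc (0:ℝ) 1,
      dist x y ≤ d → dist (ψ q p x) (ψ q p y) ≤ ε/2 := by
    intro q p
    have h1 : UniformContinuousOn (ψ q p) (Icc 0 1) :=
      isCompact_Icc.uniformContinuousOn_of_continuous (hc q p).continuousOn
    exact Metric.uniformContinuousOn_iff_le.1 h1 (ε/2) (by positivity)
  choose d hd0 hd using H
  have hne : (Finset.univ : Finset (Fin (2*n+1) × Fin n)).Nonempty :=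
    ⟨(⟨0, by omega⟩, ⟨0, hn⟩), Finset.mem_univ _⟩
  set δ0 : ℝ := (Finset.univ : Finset (Fin (2*n+1) × Fin n)).inf' hne (fun z => d z.1 z.2) with hδ0
  have hδ0pos : 0 < δ0 := by
    rw [hδ0, Finset.lt_inf'_iff]
    exact fun i _ => hd0 i.1 i.2
  have hδ0le : ∀ q p, δ0 ≤ d q p := fun q p =>
    Finset.inf'_le _ (Finset.mem_univ (q, p))
  -- choose the stage size m
  obtain ⟨m0, hm0⟩ := exists_nat_one_div_lt (lt_min_iff.2 ⟨hδ, half_pos hδ0pos⟩)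
  set m : ℕ := m0 + 1 with hmdef
  have hm : 1 ≤ m := by omega
  have hmδ' : (1:ℝ)/m < min δ (δ0/2) := by exact_mod_cast hm0
  have hcδ : cc m ≤ δ0/2 := le_of_lt (lt_of_lt_of_le hmδ' (min_le_right _ _))
  have hmR : (0:ℝ) < m := by exact_mod_cast hm
  have he := ee_pos (n := n) hm
  have hcpos := cc_pos hm
  -- choose the generic shift η
  set E : ℝ := 2^(n*(m+1)) with hE
  have hEpos : (0:ℝ) < E := by positivity
  set η0 : ℝ := (ε/2)/E with hη0
  have hη0pos : 0 < η0 := by positivity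
  set T : (Fin n → Fin (m+1)) → ℝ := fun J => ∑ p : Fin n, (2:ℝ)^((p:ℕ)*(m+1) + (J p : ℕ)) with hT
  set S : Fin (2*n+1) → (Fin n → Fin (m+1)) → ℝ :=
    fun q J => ∑ p : Fin n, ψ q p (lA n m (q:ℕ) (J p : ℕ)) with hS
  set badSet : Finset ℝ := Finset.image
    (fun z : (Fin (2*n+1)) × (Fin n → Fin (m+1)) × (Fin n → Fin (m+1)) =>
      (S z.1 z.2.2 - S z.1 z.2.1) / (T z.2.1 - T z.2.2)) Finset.univ with hbs
  obtain ⟨η, hηmem, hηbad⟩ := (Set.Ioc_infinite hη0pos).exists_notMem_finset badSet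
  have hηpos : 0 < η := hηmem.1
  have hηle : η ≤ η0 := hηmem.2
  -- the new functions
  set a : Fin (2*n+1) → Fin n → ℕ → ℝ :=
    fun q p j => ψ q p (lA n m (q:ℕ) j) + η * 2^((p:ℕ)*(m+1) + j) with ha
  set F : Fin (2*n+1) → Fin n → ℝ → ℝ := fun q p x => a q p 0 +
    ∑ j ∈ Finset.range m, (a q p (j+1) - a q p j) *
      c01 ((x - ((j:ℝ)*cc m + 2*(q:ℕ)*ee n m))/ee n m) with hF
  have hqle : ∀ q : Fin (2*n+1), (q:ℕ) ≤ 2*n := fun q => by omega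
  have hslot : ∀ q : Fin (2*n+1), (2*((q:ℕ):ℝ)+1) * ee n m ≤ cc m - ee n m :=
    fun q => slot_le hm (hqle q)
  -- t-bound
  have htb : ∀ (p : Fin n) (j : ℕ), j ≤ m → η * 2^((p:ℕ)*(m+1) + j) ≤ ε/2 := by
    intro p j hj
    have h1 : (p:ℕ)*(m+1) + j ≤ n*(m+1) := by
      have := p.isLt
      have : (p:ℕ) + 1 ≤ n := p.isLt
      calc (p:ℕ)*(m+1) + j ≤ (p:ℕ)*(m+1) + m := by omega
        _ ≤ (n-1)*(m+1) + m := by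
            have : (p:ℕ) ≤ n-1 := by omega
            have := Nat.mul_le_mul_right (m+1) this
            omega
        _ ≤ n*(m+1) := by
            have h2 : 1 ≤ n := hn
            nlinarith [Nat.sub_add_cancel h2]
    have h2 : (2:ℝ)^((p:ℕ)*(m+1)+j) ≤ E := by
      rw [hE]
      exact pow_le_pow_right₀ (by norm_num) h1
    calc η * 2^((p:ℕ)*(m+1) + j) ≤ η0 * E := by
          apply mul_le_mul hηle h2 (by positivity) (le_of_lt hη0pos)
      _ = ε/2 := by rw [hη0]; field_simp
  have htpos : ∀ (p : Fin n) (j : ℕ), 0 ≤ η * 2^((p:ℕ)*(m+1) + j) := by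
    intro p j; positivity
  -- evaluation on good intervals
  have heval : ∀ (q : Fin (2*n+1)) (p : Fin n) (j' : ℕ), j' ≤ m → ∀ x : ℝ,
      lA n m (q:ℕ) j' ≤ x → x ≤ rA n m (q:ℕ) j' → F q p x = a q p j' := by
    intro q p j' hj' x hx1 hx2
    have hterm : ∀ j ∈ Finset.range m,
        (a q p (j+1) - a q p j) * c01 ((x - ((j:ℝ)*cc m + 2*(q:ℕ)*ee n m))/ee n m)
        = if j < j' then (a q p (j+1) - a q p j) else 0 := by
      intro j hj
      rw [Finset.mem_range] at hj
      by_cases hlt : j < j'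
      · rw [if_pos hlt]
        have h1 : (1:ℝ) ≤ (x - ((j:ℝ)*cc m + 2*(q:ℕ)*ee n m))/ee n m := by
          rw [le_div_iff₀ he]
          have hj1 : (j:ℝ) + 1 ≤ (j':ℝ) := by exact_mod_cast hlt
          have h2 : (j':ℝ)*cc m - cc m + (2*((q:ℕ):ℝ)+1)*ee n m ≤ lA n m (q:ℕ) j' := le_lA
          have := hslot q
          nlinarith
        rw [c01_of_one_le h1, mul_one]
      · rw [if_neg hlt]
        push_neg at hlt
        have h1 : (x - ((j:ℝ)*cc m + 2*(q:ℕ)*ee n m))/ee n m ≤ 0 := by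
          rw [div_nonpos_iff]
          right
          constructor
          · have hj1 : (j':ℝ) ≤ (j:ℝ) := by exact_mod_cast hlt
            have h2 : rA n m (q:ℕ) j' ≤ (j':ℝ)*cc m + 2*((q:ℕ):ℝ)*ee n m := rA_le
            nlinarith
          · exact le_of_lt he
        rw [c01_of_nonpos h1, mul_zero]
    rw [hF]
    simp only
    rw [Finset.sum_congr rfl hterm]
    have hfilter : (Finset.range m).filter (fun j => j < j') = Finset.range j' := by
      ext j
      simp only [Finset.mem_filter, Finset.mem_range]
      omega
    rw [Finset.sum_ite, Finset.sum_const, smul_zero, add_zero, hfilter, Finset.sum_range_sub]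
    ring
  -- clamp invariance
  have hclamp' : ∀ q p x, F q p x = F q p (c01 x) := by
    intro q p x
    rcases le_or_gt x 0 with h | h
    · rw [c01_of_nonpos h]
      rw [hF]
      simp only
      congr 1
      apply Finset.sum_congr rfl
      intro j hj
      congr 1
      have hs0 : (0:ℝ) ≤ (j:ℝ)*cc m + 2*(q:ℕ)*ee n m := by positivity
      have hA : (x - ((j:ℝ)*cc m + 2*(q:ℕ)*ee n m))/ee n m ≤ 0 := by
        apply div_nonpos_of_nonpos_of_nonneg _ (le_of_lt he); linarith
      have hB : ((0:ℝ) - ((j:ℝ)*cc m + 2*(q:ℕ)*ee n m))/ee n m ≤ 0 := by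
        apply div_nonpos_of_nonpos_of_nonneg _ (le_of_lt he); linarith
      rw [c01_of_nonpos hA, c01_of_nonpos hB]
    · rcases le_or_gt x 1 with h1 | h1
      · rw [c01_of_mem ⟨le_of_lt h, h1⟩]
      · rw [c01_of_one_le h1.le]
        rw [hF]
        simp only
        congr 1
        apply Finset.sum_congr rfl
        intro j hj
        rw [Finset.mem_range] at hj
        congr 1
        have hjm : (j:ℝ) ≤ (m:ℝ) - 1 := by
          have : (j:ℝ) + 1 ≤ (m:ℝ) := by exact_mod_cast hj
          linarith
        have hcm : (m:ℝ) * cc m = 1 := by unfold cc; field_simp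
        have h2 : (j:ℝ)*cc m + 2*(q:ℕ)*ee n m + ee n m ≤ 1 := by
          have := hslot q
          nlinarith
        have hA : (1:ℝ) ≤ (x - ((j:ℝ)*cc m + 2*(q:ℕ)*ee n m))/ee n m := by
          rw [le_div_iff₀ he]; linarith
        have hB : (1:ℝ) ≤ ((1:ℝ) - ((j:ℝ)*cc m + 2*(q:ℕ)*ee n m))/ee n m := by
          rw [le_div_iff₀ he]; linarith
        rw [c01_of_one_le hA, c01_of_one_le hB]
  -- perturbation bound
  have hpert : ∀ q p x, |F q p x - ψ q p x| ≤ ε := by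
    have key : ∀ q p y, y ∈ Icc (0:ℝ) 1 → |F q p y - ψ q p y| ≤ ε := by
      intro q p y hy
      have hcm : (m:ℝ) * cc m = 1 := by unfold cc; field_simp
      have hec : ee n m ≤ cc m := by
        rw [cc_eq (n := n) hm]; nlinarith
      -- distance-based estimate for a single node
      have hnode : ∀ j : ℕ, j ≤ m → dist y (lA n m (q:ℕ) j) ≤ cc m →
          |a q p j - ψ q p y| ≤ ε := by
        intro j hj hdist
        have h1 : |ψ q p (lA n m (q:ℕ) j) - ψ q p y| ≤ ε/2 := by
          rw [← Real.dist_eq]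
          exact hd q p _ (lA_mem hm (hqle q) hj) y hy (by rw [dist_comm]; linarith [hcδ, hδ0le q p, hdist])
        have h2 := htb p j hj
        have h3 := htpos p j
        rw [ha]
        simp only
        calc |ψ q p (lA n m (↑q) j) + η * 2 ^ ((p:ℕ) * (m + 1) + j) - ψ q p y|
            ≤ |ψ q p (lA n m (↑q) j) - ψ q p y| + |η * 2 ^ ((p:ℕ) * (m + 1) + j)| := by
              have := abs_add_le (ψ q p (lA n m (↑q) j) - ψ q p y) (η * 2 ^ ((p:ℕ) * (m + 1) + j))
              calc _ = |ψ q p (lA n m (↑q) j) - ψ q p y + η * 2 ^ ((p:ℕ) * (m + 1) + j)| := by ring_nf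
                _ ≤ _ := this
          _ ≤ ε/2 + ε/2 := by
              apply add_le_add h1
              rw [abs_of_nonneg h3]; exact h2
          _ = ε := by ring
      by_cases hbad : bad n m (q:ℕ) y
      · obtain ⟨j, hj, hy1, hy2⟩ := hbad
        set lam : ℝ := c01 ((y - ((j:ℝ)*cc m + 2*(q:ℕ)*ee n m))/ee n m) with hlam
        have hlam0 := c01_nonneg ((y - ((j:ℝ)*cc m + 2*(q:ℕ)*ee n m))/ee n m)
        have hlam1 := c01_le_one ((y - ((j:ℝ)*cc m + 2*(q:ℕ)*ee n m))/ee n m)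
        -- evaluate F at y
        have hFy : F q p y = a q p j + (a q p (j+1) - a q p j) * lam := by
          have hterm : ∀ j'' ∈ Finset.range m,
              (a q p (j''+1) - a q p j'') * c01 ((y - ((j'':ℝ)*cc m + 2*(q:ℕ)*ee n m))/ee n m)
              = if j'' < j then (a q p (j''+1) - a q p j'') else
                  (if j'' = j then (a q p (j+1) - a q p j) * lam else 0) := by
            intro j'' hj''
            rw [Finset.mem_range] at hj''
            rcases lt_trichotomy j'' j with hlt | heq | hgt
            · rw [if_pos hlt]
              have hj1 : (j'':ℝ) + 1 ≤ (j:ℝ) := by exact_mod_cast hlt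
              have : (1:ℝ) ≤ (y - ((j'':ℝ)*cc m + 2*(q:ℕ)*ee n m))/ee n m := by
                rw [le_div_iff₀ he]
                nlinarith [hslot q]
              rw [c01_of_one_le this, mul_one]
            · rw [if_neg (by omega), if_pos heq, heq, hlam]
            · rw [if_neg (by omega), if_neg (by omega)]
              have hj1 : (j:ℝ) + 1 ≤ (j'':ℝ) := by exact_mod_cast hgt
              have : (y - ((j'':ℝ)*cc m + 2*(q:ℕ)*ee n m))/ee n m ≤ 0 := by
                apply div_nonpos_of_nonpos_of_nonneg _ (le_of_lt he)
                nlinarith [hslot q]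
              rw [c01_of_nonpos this, mul_zero]
          rw [hF]
          simp only
          rw [Finset.sum_congr rfl hterm]
          have hsplit := Finset.sum_range_add_sum_Ico
            (f := fun j'' => if j'' < j then (a q p (j''+1) - a q p j'') else
                  (if j'' = j then (a q p (j+1) - a q p j) * lam else 0))
            (Nat.succ_le_of_lt hj)
          rw [← hsplit, Finset.sum_range_succ]
          have hz : ∑ j'' ∈ Finset.Ico (j+1) m, (if j'' < j then (a q p (j''+1) - a q p j'') else
                  (if j'' = j then (a q p (j+1) - a q p j) * lam else 0)) = 0 := by
            apply Finset.sum_eq_zero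
            intro j'' hj''
            rw [Finset.mem_Ico] at hj''
            rw [if_neg (by omega), if_neg (by omega)]
          rw [hz, add_zero, if_neg (lt_irrefl j), if_pos rfl]
          have : ∑ j'' ∈ Finset.range j, (if j'' < j then (a q p (j''+1) - a q p j'') else
                  (if j'' = j then (a q p (j+1) - a q p j) * lam else 0))
              = ∑ j'' ∈ Finset.range j, (a q p (j''+1) - a q p j'') := by
            apply Finset.sum_congr rfl
            intro j'' hj''
            rw [Finset.mem_range] at hj''
            rw [if_pos hj'']
          rw [this, Finset.sum_range_sub]
          ring
        -- the two node estimates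
        have hd1 : dist y (lA n m (q:ℕ) j) ≤ cc m := by
          rw [Real.dist_eq, abs_of_nonneg]
          · rcases le_total ((j:ℝ)*cc m - cc m + (2*((q:ℕ):ℝ)+1)*ee n m) 0 with hc0 | hc0
            · have : lA n m (q:ℕ) j = 0 := max_eq_left hc0
              rw [this]
              nlinarith [hslot q]
            · have : lA n m (q:ℕ) j = (j:ℝ)*cc m - cc m + (2*((q:ℕ):ℝ)+1)*ee n m :=
                max_eq_right hc0
              rw [this]
              nlinarith [hslot q]
          · have h1 : lA n m (q:ℕ) j ≤ rA n m (q:ℕ) j := lA_le_rA hm (hqle q) (le_of_lt hj)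
            have h2 := rA_le (n := n) (m := m) (q := (q:ℕ)) (j := j)
            linarith
        have hd2 : dist y (lA n m (q:ℕ) (j+1)) ≤ cc m := by
          have hr : lA n m (q:ℕ) (j+1) = (j:ℝ)*cc m + (2*((q:ℕ):ℝ)+1)*ee n m := by
            have harg : ((j+1:ℕ):ℝ)*cc m - cc m + (2*((q:ℕ):ℝ)+1)*ee n m
                = (j:ℝ)*cc m + (2*((q:ℕ):ℝ)+1)*ee n m := by push_cast; ring
            have h0 : (0:ℝ) ≤ (j:ℝ)*cc m + (2*((q:ℕ):ℝ)+1)*ee n m := by positivity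
            unfold lA
            rw [harg]
            exact max_eq_right h0
          rw [Real.dist_eq, hr, abs_le]
          constructor <;> nlinarith
        have e1 := hnode j (le_of_lt hj) hd1
        have e2 := hnode (j+1) hj hd2
        rw [hFy]
        calc |a q p j + (a q p (j+1) - a q p j) * lam - ψ q p y|
            = |(1 - lam) * (a q p j - ψ q p y) + lam * (a q p (j+1) - ψ q p y)| := by ring_nf
          _ ≤ |(1 - lam) * (a q p j - ψ q p y)| + |lam * (a q p (j+1) - ψ q p y)| := abs_add_le _ _
          _ = (1 - lam) * |a q p j - ψ q p y| + lam * |a q p (j+1) - ψ q p y| := by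
              rw [abs_mul, abs_mul, abs_of_nonneg hlam0, abs_of_nonneg (by linarith : (0:ℝ) ≤ 1 - lam)]
          _ ≤ (1 - lam) * ε + lam * ε := by
              apply add_le_add
              · exact mul_le_mul_of_nonneg_left e1 (by linarith)
              · exact mul_le_mul_of_nonneg_left e2 hlam0
          _ = ε := by ring
      · obtain ⟨j', hj', hyA⟩ := cover hm (hqle q) hy hbad
        rw [heval q p j' hj' y hyA.1 hyA.2]
        apply hnode j' hj'
        rw [Real.dist_eq, abs_of_nonneg (by linarith [hyA.1])]
        linarith [rA_sub_lA_le (n := n) (m := m) (q := (q:ℕ)) (j := j') hm, hyA.2]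
    intro q p x
    rw [hclamp' q p x, hcl q p x]
    exact key q p (c01 x) (c01_mem x)
  -- injectivity of the labels
  have hinj' : ∀ q, Function.Injective (fun J : Fin n → Fin (m+1) => ∑ p, a q p (J p : ℕ)) := by
    intro q J J' hJJ
    simp only at hJJ
    by_contra hne
    have hcast : ∀ K : Fin n → Fin (m+1),
        T K = ((∑ p : Fin n, 2^((p:ℕ)*(m+1) + (K p : ℕ)) : ℕ) : ℝ) := by
      intro K
      rw [hT]
      push_cast
      rfl
    have hTT : T J - T J' ≠ 0 := by
      rw [sub_ne_zero, hcast, hcast]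
      intro hcc
      apply hne
      exact dig_inj n m (by exact_mod_cast hcc)
    have hexp : ∀ K : Fin n → Fin (m+1), (∑ p, a q p (K p : ℕ)) = S q K + η * T K := by
      intro K
      rw [ha, hS, hT]
      simp only
      rw [Finset.sum_add_distrib, Finset.mul_sum]
    rw [hexp, hexp] at hJJ
    have hη : η = (S q J' - S q J) / (T J - T J') := by
      rw [eq_div_iff hTT]
      linarith
    apply hηbad
    rw [hbs]
    apply Finset.mem_image.2
    exact ⟨(q, J, J'), Finset.mem_univ _, by rw [← hη]⟩
  refine ⟨⟨m, hm, le_of_lt (lt_of_lt_of_le hmδ' (min_le_left _ _)), F, ?_, hclamp', hpert,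
    fun q J => ∑ p, a q p (J p : ℕ), ?_, hinj'⟩⟩
  · intro q p
    rw [hF]
    refine continuous_const.add (continuous_finset_sum _ (fun j _ => continuous_const.mul (c01_cont.comp ?_)))
    fun_prop
  · intro q J x hx
    exact Finset.sum_congr rfl (fun p _ => heval q p (J p : ℕ) (by omega) (x p) (hx p).1 (hx p).2)

/-! ### the chain of approximations to the inner functions -/

variable (n) in
structure Chain where
  ψ : Fin (2*n+1) → Fin n → ℝ → ℝ
  cont : ∀ q p, Continuous (ψ q p)
  clamp : ∀ q p x, ψ q p x = ψ q p (c01 x)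
  m : ℕ
  hm : 1 ≤ m
  v : Fin (2*n+1) → (Fin n → Fin (m+1)) → ℝ
  hv : ∀ (q : Fin (2*n+1)) (J : Fin n → Fin (m+1)) (x : Fin n → ℝ),
        (∀ p, x p ∈ Icc (lA n m (q:ℕ) (J p : ℕ)) (rA n m (q:ℕ) (J p : ℕ))) →
        ∑ p, ψ q p (x p) = v q J
  hinj : ∀ q, Function.Injective (v q)
  bud : ℝ
  hbud : 0 < bud

def chainPairs (s : Chain n) :
    Finset (Fin (2*n+1) × (Fin n → Fin (s.m+1)) × (Fin n → Fin (s.m+1))) :=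
  Finset.univ.filter (fun z => z.2.1 ≠ z.2.2)

lemma chainPairs_nonempty (hn : 1 ≤ n) (s : Chain n) : (chainPairs s).Nonempty := by
  have hsm := s.hm
  refine ⟨(⟨0, by omega⟩, fun _ => ⟨0, by omega⟩, fun _ => ⟨1, by omega⟩), ?_⟩
  simp only [chainPairs, Finset.mem_filter, Finset.mem_univ, true_and]
  intro h
  have := congrFun h ⟨0, hn⟩
  simp [Fin.ext_iff] at this

/-- minimal separation of labels at one stage -/
def sep (hn : 1 ≤ n) (s : Chain n) : ℝ :=
  (chainPairs s).inf' (chainPairs_nonempty hn s) (fun z => |s.v z.1 z.2.1 - s.v z.1 z.2.2|)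

lemma sep_pos (hn : 1 ≤ n) (s : Chain n) : 0 < sep hn s := by
  rw [sep, Finset.lt_inf'_iff]
  rintro ⟨q, J, J'⟩ hz
  simp only [chainPairs, Finset.mem_filter, Finset.mem_univ, true_and] at hz
  rw [abs_pos, sub_ne_zero]
  exact fun h => hz (s.hinj q h)

lemma sep_le (hn : 1 ≤ n) (s : Chain n) {q : Fin (2*n+1)} {J J' : Fin n → Fin (s.m+1)}
    (h : J ≠ J') : sep hn s ≤ |s.v q J - s.v q J'| := by
  have hmem : (q, (J, J')) ∈ chainPairs s := by simp [chainPairs, h]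
  unfold sep
  exact Finset.inf'_le (fun z => |s.v z.1 z.2.1 - s.v z.1 z.2.2|) hmem

noncomputable def nextC (hn : 1 ≤ n) (s : Chain n) :
    {t : Chain n // (∀ q p x, |t.ψ q p x - s.ψ q p x| ≤ t.bud) ∧
      t.bud = min (s.bud/2) (sep hn s/(16*((n:ℝ)+1))) ∧ (1:ℝ)/t.m ≤ s.bud} :=
  let ε := min (s.bud/2) (sep hn s/(16*((n:ℝ)+1)))
  have hεpos : 0 < ε := lt_min (half_pos s.hbud)
    (div_pos (sep_pos hn s) (by positivity))
  let o := Classical.choice (step_exists hn s.ψ s.cont s.clamp hεpos s.hbud)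
  ⟨{ ψ := o.F, cont := o.cont, clamp := o.clamp, m := o.m, hm := o.hm, v := o.v,
     hv := o.hv, hinj := o.hinj, bud := ε, hbud := hεpos }, o.pert, rfl, o.hmδ⟩

noncomputable def chainStart (hn : 1 ≤ n) : Chain n :=
  let o := Classical.choice (step_exists hn (fun _ _ _ => (0:ℝ))
    (fun _ _ => continuous_const) (fun _ _ _ => rfl) one_pos one_pos)
  { ψ := o.F, cont := o.cont, clamp := o.clamp, m := o.m, hm := o.hm, v := o.v,
    hv := o.hv, hinj := o.hinj, bud := 1, hbud := one_pos }

noncomputable def chain (hn : 1 ≤ n) : ℕ → Chain n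
  | 0 => chainStart hn
  | (i+1) => (nextC hn (chain hn i)).1

lemma chain_pert (hn : 1 ≤ n) (i : ℕ) :
    ∀ q p x, |(chain hn (i+1)).ψ q p x - (chain hn i).ψ q p x| ≤ (chain hn (i+1)).bud :=
  (nextC hn (chain hn i)).2.1

lemma chain_bud_succ (hn : 1 ≤ n) (i : ℕ) :
    (chain hn (i+1)).bud = min ((chain hn i).bud/2) (sep hn (chain hn i)/(16*((n:ℝ)+1))) :=
  (nextC hn (chain hn i)).2.2.1

lemma chain_m (hn : 1 ≤ n) (i : ℕ) : (1:ℝ)/(chain hn (i+1)).m ≤ (chain hn i).bud :=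
  (nextC hn (chain hn i)).2.2.2

lemma chain_bud0 (hn : 1 ≤ n) : (chain hn 0).bud = 1 := rfl

lemma chain_bud_half (hn : 1 ≤ n) (i : ℕ) :
    (chain hn (i+1)).bud ≤ (chain hn i).bud / 2 := by
  rw [chain_bud_succ]; exact min_le_left _ _

lemma chain_bud_sep (hn : 1 ≤ n) (i : ℕ) :
    (chain hn (i+1)).bud ≤ sep hn (chain hn i)/(16*((n:ℝ)+1)) := by
  rw [chain_bud_succ]; exact min_le_right _ _

lemma chain_bud_le (hn : 1 ≤ n) (i : ℕ) : ∀ k, (chain hn (i+k)).bud ≤ (chain hn i).bud * (1/2)^k := by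
  intro k
  induction k with
  | zero => simp
  | succ k ih =>
    have h1 := chain_bud_half hn (i+k)
    have : (chain hn (i + (k+1))).bud = (chain hn ((i + k) + 1)).bud := by ring_nf
    rw [this]
    calc (chain hn ((i + k) + 1)).bud ≤ (chain hn (i+k)).bud / 2 := h1
      _ ≤ ((chain hn i).bud * (1/2)^k)/2 := by linarith
      _ = (chain hn i).bud * (1/2)^(k+1) := by ring

lemma chain_bud_pow (hn : 1 ≤ n) (i : ℕ) : (chain hn i).bud ≤ (1/2:ℝ)^i := by
  have := chain_bud_le hn 0 i
  simp only [Nat.zero_add] at this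
  rw [chain_bud0] at this
  linarith

/-! ### the limit inner functions -/

noncomputable def limψ (hn : 1 ≤ n) (q : Fin (2*n+1)) (p : Fin n) (x : ℝ) : ℝ :=
  (chain hn 0).ψ q p x + ∑' i, ((chain hn (i+1)).ψ q p x - (chain hn i).ψ q p x)

lemma limψ_cont (hn : 1 ≤ n) (q : Fin (2*n+1)) (p : Fin n) : Continuous (limψ hn q p) := by
  apply Continuous.add ((chain hn 0).cont q p)
  apply continuous_tsum (u := fun i => (1/2:ℝ)^(i+1))
  · exact fun i => ((chain hn (i+1)).cont q p).sub ((chain hn i).cont q p)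
  · apply Summable.comp_injective (summable_geometric_of_lt_one (by norm_num) (by norm_num))
      (add_left_injective 1)
  · intro i x
    rw [Real.norm_eq_abs]
    exact le_trans (chain_pert hn i q p x) (chain_bud_pow hn (i+1))

lemma limψ_summable (hn : 1 ≤ n) (q : Fin (2*n+1)) (p : Fin n) (x : ℝ) :
    Summable (fun i => (chain hn (i+1)).ψ q p x - (chain hn i).ψ q p x) := by
  apply Summable.of_norm_bounded (g := fun i => (1/2:ℝ)^(i+1))
  · apply Summable.comp_injective (summable_geometric_of_lt_one (by norm_num) (by norm_num))
      (add_left_injective 1)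
  · intro i
    rw [Real.norm_eq_abs]
    exact le_trans (chain_pert hn i q p x) (chain_bud_pow hn (i+1))

/-- distance from the limit to a stage -/
lemma limψ_close (hn : 1 ≤ n) (q : Fin (2*n+1)) (p : Fin n) (x : ℝ) (k : ℕ) :
    |limψ hn q p x - (chain hn k).ψ q p x| ≤ 2 * (chain hn (k+1)).bud := by
  have hsum := limψ_summable hn q p x
  have htele := Summable.sum_add_tsum_nat_add (f := fun i => (chain hn (i+1)).ψ q p x - (chain hn i).ψ q p x) k hsum
  have hpart : ∑ i ∈ Finset.range k, ((chain hn (i+1)).ψ q p x - (chain hn i).ψ q p x)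
      = (chain hn k).ψ q p x - (chain hn 0).ψ q p x :=
    Finset.sum_range_sub (fun i => (chain hn i).ψ q p x) k
  have heq : limψ hn q p x - (chain hn k).ψ q p x
      = ∑' i, ((chain hn (i+k+1)).ψ q p x - (chain hn (i+k)).ψ q p x) := by
    rw [limψ]
    rw [← htele, hpart]
    ring
  rw [heq]
  have hsum2 : Summable (fun i => (chain hn (i+k+1)).ψ q p x - (chain hn (i+k)).ψ q p x) :=
    (summable_nat_add_iff k).2 hsum
  calc |∑' i, ((chain hn (i+k+1)).ψ q p x - (chain hn (i+k)).ψ q p x)|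
      ≤ ∑' i, |(chain hn (i+k+1)).ψ q p x - (chain hn (i+k)).ψ q p x| := by
        have h2 := norm_tsum_le_tsum_norm (f := fun i => (chain hn (i+k+1)).ψ q p x - (chain hn (i+k)).ψ q p x)
          (by simpa [Real.norm_eq_abs] using hsum2.abs)
        simpa [Real.norm_eq_abs] using h2
    _ ≤ ∑' i, (chain hn (k+1)).bud * (1/2)^i := by
        apply Summable.tsum_le_tsum
        · intro i
          calc |(chain hn (i+k+1)).ψ q p x - (chain hn (i+k)).ψ q p x|
              ≤ (chain hn ((i+k)+1)).bud := chain_pert hn (i+k) q p x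
            _ = (chain hn ((k+1)+i)).bud := by ring_nf
            _ ≤ (chain hn (k+1)).bud * (1/2)^i := chain_bud_le hn (k+1) i
        · exact hsum2.abs
        · apply Summable.mul_left
          exact summable_geometric_of_lt_one (by norm_num) (by norm_num)
    _ = (chain hn (k+1)).bud * ∑' i, (1/2:ℝ)^i := by rw [tsum_mul_left]
    _ = (chain hn (k+1)).bud * 2 := by
        rw [tsum_geometric_of_lt_one (by norm_num) (by norm_num)]
        norm_num
    _ = 2 * (chain hn (k+1)).bud := by ring

/-- the limit functions send each stage-cube close to its label -/
lemma limψ_label (hn : 1 ≤ n) (i : ℕ) (q : Fin (2*n+1))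
    (J : Fin n → Fin ((chain hn i).m+1)) (x : Fin n → ℝ)
    (hx : ∀ p, x p ∈ Icc (lA n (chain hn i).m (q:ℕ) (J p:ℕ)) (rA n (chain hn i).m (q:ℕ) (J p:ℕ))) :
    |∑ p, limψ hn q p (x p) - (chain hn i).v q J| ≤ sep hn (chain hn i) / 8 := by
  have h1 := (chain hn i).hv q J x hx
  have hb := chain_bud_sep hn i
  have hbp := (chain hn (i+1)).hbud
  have hsp := sep_pos hn (chain hn i)
  have hn0 : (0:ℝ) ≤ (n:ℝ) := Nat.cast_nonneg n
  calc |∑ p, limψ hn q p (x p) - (chain hn i).v q J|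
      = |∑ p, (limψ hn q p (x p) - (chain hn i).ψ q p (x p))| := by
        rw [Finset.sum_sub_distrib, h1]
    _ ≤ ∑ p, |limψ hn q p (x p) - (chain hn i).ψ q p (x p)| := Finset.abs_sum_le_sum_abs _ _
    _ ≤ ∑ _p : Fin n, 2*(chain hn (i+1)).bud :=
        Finset.sum_le_sum (fun p _ => limψ_close hn q p (x p) i)
    _ = (n:ℝ) * (2*(chain hn (i+1)).bud) := by
        rw [Finset.sum_const, Finset.card_univ, Fintype.card_fin, nsmul_eq_mul]
    _ ≤ sep hn (chain hn i) / 8 := by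
        have h2 : (n:ℝ) * (2*(chain hn (i+1)).bud) ≤ (n:ℝ) * (2*(sep hn (chain hn i)/(16*((n:ℝ)+1)))) := by
          apply mul_le_mul_of_nonneg_left _ hn0
          linarith
        apply le_trans h2
        have h3 : 2*(n:ℝ)/(16*((n:ℝ)+1)) ≤ 1/8 := by
          rw [div_le_div_iff₀ (by positivity) (by norm_num)]
          nlinarith
        calc (n:ℝ) * (2*(sep hn (chain hn i)/(16*((n:ℝ)+1))))
            = sep hn (chain hn i) * (2*(n:ℝ)/(16*((n:ℝ)+1))) := by ring
          _ ≤ sep hn (chain hn i) * (1/8) :=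
              mul_le_mul_of_nonneg_left h3 (le_of_lt hsp)
          _ = sep hn (chain hn i)/8 := by ring

open Classical in
/-- at each stage, each point of the cube is good for at least `n+1` of the systems -/
lemma good_card (hn : 1 ≤ n) (hm : 1 ≤ m) (x : Fin n → ℝ) (hx : ∀ p, x p ∈ Icc (0:ℝ) 1) :
    n + 1 ≤ (Finset.univ.filter (fun q : Fin (2*n+1) => ∀ p, ¬ bad n m (q:ℕ) (x p))).card := by
  classical
  set B := Finset.univ.filter (fun q : Fin (2*n+1) => ∃ p, bad n m (q:ℕ) (x p)) with hB
  have hBmem : ∀ q ∈ B, ∃ p : Fin n, bad n m (q:ℕ) (x p) := by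
    intro q hq
    simpa [hB] using hq
  have hcard : B.card ≤ n := by
    have hex : ∀ q : Fin (2*n+1), ∃ p : Fin n, q ∈ B → bad n m (q:ℕ) (x p) := by
      intro q
      by_cases hq : q ∈ B
      · obtain ⟨p, hp⟩ := hBmem q hq
        exact ⟨p, fun _ => hp⟩
      · exact ⟨⟨0, hn⟩, fun h => absurd h hq⟩
    choose g hg using hex
    have hinj : Set.InjOn g B := by
      intro q1 h1 q2 h2 heq
      have b1 := hg q1 h1
      have b2 := hg q2 h2
      rw [heq] at b1
      have := bad_disj hm (by omega : (q1:ℕ) ≤ 2*n) (by omega : (q2:ℕ) ≤ 2*n) b1 b2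
      exact Fin.ext this
    calc B.card ≤ (Finset.univ : Finset (Fin n)).card :=
          Finset.card_le_card_of_injOn g (fun _ _ => Finset.mem_univ _) hinj
      _ = n := by rw [Finset.card_univ, Fintype.card_fin]
  have hsub : Finset.univ \ B ⊆ Finset.univ.filter (fun q : Fin (2*n+1) => ∀ p, ¬ bad n m (q:ℕ) (x p)) := by
    intro q hq
    simp only [hB, Finset.mem_sdiff, Finset.mem_filter, Finset.mem_univ, true_and, not_exists] at hq ⊢
    exact hq
  have h1 : (2*n+1) - n ≤ (Finset.univ \ B).card := by
    have hsd := Finset.card_sdiff_of_subset (Finset.subset_univ B)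
    rw [hsd, Finset.card_univ, Fintype.card_fin]
    omega
  have h2 := Finset.card_le_card hsub
  omega

/-! ### outer functions -/

def trap (l r s y : ℝ) : ℝ := c01 ((min (y - l) (r - y))/s + 1)

lemma trap_cont (l r s : ℝ) : Continuous (fun y => trap l r s y) := by
  unfold trap
  exact c01_cont.comp (by fun_prop)

lemma trap_nonneg (l r s y : ℝ) : 0 ≤ trap l r s y := c01_nonneg _

lemma trap_le_one (l r s y : ℝ) : trap l r s y ≤ 1 := c01_le_one _

lemma trap_eq_one {l r s y : ℝ} (hs : 0 < s) (h1 : l ≤ y) (h2 : y ≤ r) : trap l r s y = 1 := by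
  apply c01_of_one_le
  have hmin : (0:ℝ) ≤ min (y-l) (r-y) := le_min (by linarith) (by linarith)
  have := div_nonneg hmin (le_of_lt hs)
  linarith

lemma trap_support {l r s y : ℝ} (hs : 0 < s) (h : trap l r s y ≠ 0) :
    l - s ≤ y ∧ y ≤ r + s := by
  constructor
  · by_contra h1
    push_neg at h1
    apply h
    apply c01_of_nonpos
    have hm : min (y - l) (r - y) ≤ y - l := min_le_left _ _
    have : (min (y - l) (r - y))/s ≤ -1 := by
      rw [div_le_iff₀ hs]
      linarith
    linarith
  · by_contra h1
    push_neg at h1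
    apply h
    apply c01_of_nonpos
    have hm : min (y - l) (r - y) ≤ r - y := min_le_right _ _
    have : (min (y - l) (r - y))/s ≤ -1 := by
      rw [div_le_iff₀ hs]
      linarith
    linarith

/-- one step of the outer iteration -/
lemma outer_step (hn : 1 ≤ n) (F : C((Fin n → Icc (0:ℝ) 1), ℝ)) :
    ∃ Φ : Fin (2*n+1) → ℝ → ℝ, (∀ q, Continuous (Φ q)) ∧
      (∀ q y, |Φ q y| ≤ ‖F‖/((n:ℝ)+1)) ∧
      (∀ x, |F x - ∑ q, Φ q (∑ p, limψ hn q p ((x p):ℝ))| ≤ (4*(n:ℝ)+1)/(4*(n:ℝ)+4) * ‖F‖) := by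
  classical
  set M := ‖F‖ with hMdef
  have hM0 : 0 ≤ M := norm_nonneg F
  rcases eq_or_lt_of_le hM0 with hM | hM
  · refine ⟨fun _ _ => 0, fun q => continuous_const, ?_, ?_⟩
    · intro q y
      rw [abs_zero]
      positivity
    · intro x
      have h1 : |F x| ≤ M := F.norm_coe_le_norm x
      rw [Finset.sum_const_zero, sub_zero]
      calc |F x| ≤ M := h1
        _ = (4*(n:ℝ)+1)/(4*(n:ℝ)+4) * M := by rw [← hM]; ring
  · set εF := M/(8*(n:ℝ)+4) with hεF
    have hεFpos : 0 < εF := by rw [hεF]; positivity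
    have hUC := CompactSpace.uniformContinuous_of_continuous F.continuous
    rw [Metric.uniformContinuous_iff] at hUC
    obtain ⟨δF, hδF, hδ⟩ := hUC εF hεFpos
    obtain ⟨k, hk⟩ := exists_pow_lt_of_lt_one hδF (by norm_num : (1/2:ℝ) < 1)
    set i := k + 1 with hi
    have hm : 1 ≤ (chain hn i).m := (chain hn i).hm
    have hcc : cc (chain hn i).m < δF := by
      have h1 := chain_m hn k
      have h2 := chain_bud_pow hn k
      calc cc (chain hn i).m = 1/((chain hn (k+1)).m : ℝ) := rfl
        _ ≤ (chain hn k).bud := h1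
        _ ≤ (1/2)^k := h2
        _ < δF := hk
    set ρ := sep hn (chain hn i) with hρdef
    have hρ : 0 < ρ := sep_pos hn (chain hn i)
    have hρ4 : 0 < ρ/4 := by positivity
    have hq2n : ∀ q : Fin (2*n+1), (q:ℕ) ≤ 2*n := fun q => by omega
    set pt : Fin (2*n+1) → (Fin n → Fin ((chain hn i).m+1)) → (Fin n → Icc (0:ℝ) 1) :=
      fun q J p => ⟨lA n (chain hn i).m (q:ℕ) (J p :ℕ), lA_mem hm (hq2n q) (by omega)⟩ with hpt
    set w : Fin (2*n+1) → (Fin n → Fin ((chain hn i).m+1)) → ℝ := fun q J => F (pt q J)/((n:ℝ)+1) with hw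
    have hwb : ∀ q J, |w q J| ≤ M/((n:ℝ)+1) := by
      intro q J
      rw [hw]
      simp only
      rw [abs_div, abs_of_nonneg (by positivity : (0:ℝ) ≤ (n:ℝ)+1)]
      gcongr
      exact F.norm_coe_le_norm (pt q J)
    set Φ : Fin (2*n+1) → ℝ → ℝ := fun q y =>
      ∑ J : Fin n → Fin ((chain hn i).m+1), w q J * trap ((chain hn i).v q J - ρ/8) ((chain hn i).v q J + ρ/8) (ρ/4) y with hΦ
    have huniq : ∀ (q : Fin (2*n+1)) (y : ℝ) (J J' : Fin n → Fin ((chain hn i).m+1)),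
        trap ((chain hn i).v q J - ρ/8) ((chain hn i).v q J + ρ/8) (ρ/4) y ≠ 0 →
        trap ((chain hn i).v q J' - ρ/8) ((chain hn i).v q J' + ρ/8) (ρ/4) y ≠ 0 → J = J' := by
      intro q y J J' h1 h2
      by_contra hne
      obtain ⟨a1, b1⟩ := trap_support hρ4 h1
      obtain ⟨a2, b2⟩ := trap_support hρ4 h2
      have hsep := sep_le hn (chain hn i) (q := q) hne
      have e1 : |(chain hn i).v q J - y| ≤ 3*ρ/8 := abs_le.2 ⟨by linarith, by linarith⟩
      have e2 : |y - (chain hn i).v q J'| ≤ 3*ρ/8 := abs_le.2 ⟨by linarith, by linarith⟩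
      have e3 := abs_sub_le ((chain hn i).v q J) y ((chain hn i).v q J')
      rw [← hρdef] at hsep
      linarith
    have hΦb : ∀ q y, |Φ q y| ≤ M/((n:ℝ)+1) := by
      intro q y
      rw [hΦ]
      simp only
      by_cases hz : ∀ J : Fin n → Fin ((chain hn i).m+1), trap ((chain hn i).v q J - ρ/8) ((chain hn i).v q J + ρ/8) (ρ/4) y = 0
      · rw [Finset.sum_eq_zero (fun J _ => by rw [hz J, mul_zero]), abs_zero]
        positivity
      · push_neg at hz
        obtain ⟨J0, hJ0⟩ := hz
        rw [Finset.sum_eq_single J0]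
        · calc |w q J0 * trap ((chain hn i).v q J0 - ρ/8) ((chain hn i).v q J0 + ρ/8) (ρ/4) y|
              = |w q J0| * |trap ((chain hn i).v q J0 - ρ/8) ((chain hn i).v q J0 + ρ/8) (ρ/4) y| := abs_mul _ _
            _ ≤ (M/((n:ℝ)+1)) * 1 := by
                apply mul_le_mul (hwb q J0) _ (abs_nonneg _) (by positivity)
                rw [abs_of_nonneg (trap_nonneg _ _ _ _)]
                exact trap_le_one _ _ _ _
            _ = M/((n:ℝ)+1) := mul_one _
        · intro J _ hJne
          by_cases ht : trap ((chain hn i).v q J - ρ/8) ((chain hn i).v q J + ρ/8) (ρ/4) y = 0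
          · rw [ht, mul_zero]
          · exact absurd (huniq q y J J0 ht hJ0) hJne
        · intro h
          exact absurd (Finset.mem_univ J0) h
    have hval : ∀ (x : Fin n → Icc (0:ℝ) 1) (q : Fin (2*n+1)) (J : Fin n → Fin ((chain hn i).m+1)),
        (∀ p, ((x p):ℝ) ∈ Icc (lA n (chain hn i).m (q:ℕ) (J p:ℕ)) (rA n (chain hn i).m (q:ℕ) (J p:ℕ))) →
        Φ q (∑ p, limψ hn q p ((x p):ℝ)) = w q J := by
      intro x q J hJ
      have hclose := limψ_label hn i q J (fun p => ((x p):ℝ)) hJ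
      rw [← hρdef] at hclose
      rw [abs_le] at hclose
      set y := ∑ p, limψ hn q p ((x p):ℝ) with hy
      rw [hΦ]
      simp only
      rw [Finset.sum_eq_single J]
      · rw [trap_eq_one hρ4 (by linarith [hclose.1]) (by linarith [hclose.2]), mul_one]
      · intro J' _ hne
        by_cases ht : trap ((chain hn i).v q J' - ρ/8) ((chain hn i).v q J' + ρ/8) (ρ/4) y = 0
        · rw [ht, mul_zero]
        · exfalso
          obtain ⟨a2, b2⟩ := trap_support hρ4 ht
          have hsep := sep_le hn (chain hn i) (q := q) hne
          rw [← hρdef] at hsep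
          have e1 : |(chain hn i).v q J' - y| ≤ 3*ρ/8 := abs_le.2 ⟨by linarith, by linarith⟩
          have e2 : |y - (chain hn i).v q J| ≤ ρ/8 := abs_le.2 ⟨by linarith [hclose.2], by linarith [hclose.1]⟩
          have e3 := abs_sub_le ((chain hn i).v q J') y ((chain hn i).v q J)
          linarith
      · intro h
        exact absurd (Finset.mem_univ J) h
    refine ⟨Φ, ?_, hΦb, ?_⟩
    · intro q
      rw [hΦ]
      exact continuous_finset_sum _ (fun J _ => continuous_const.mul (trap_cont _ _ _))
    · intro x
      set Gd := Finset.univ.filter (fun q : Fin (2*n+1) => ∀ p, ¬ bad n (chain hn i).m (q:ℕ) ((x p):ℝ)) with hGd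
      have hgood : n + 1 ≤ Gd.card := good_card hn hm _ (fun p => (x p).2)
      have hcard_le : Gd.card ≤ 2*n+1 := by
        calc Gd.card ≤ (Finset.univ : Finset (Fin (2*n+1))).card := Finset.card_le_univ _
          _ = 2*n+1 := by rw [Finset.card_univ, Fintype.card_fin]
      have hJex : ∀ q : Fin (2*n+1), ∃ J : Fin n → Fin ((chain hn i).m+1), q ∈ Gd →
          ∀ p, ((x p):ℝ) ∈ Icc (lA n (chain hn i).m (q:ℕ) (J p:ℕ)) (rA n (chain hn i).m (q:ℕ) (J p:ℕ)) := by
        intro q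
        by_cases hq : q ∈ Gd
        · have hq' : ∀ p, ¬ bad n (chain hn i).m (q:ℕ) ((x p):ℝ) := by
            simpa [hGd] using hq
          have hc := fun p => cover hm (hq2n q) (x p).2 (hq' p)
          choose j hj hmem using hc
          exact ⟨fun p => ⟨j p, by have := hj p; omega⟩, fun _ p => hmem p⟩
        · exact ⟨fun _ => ⟨0, by omega⟩, fun h => absurd h hq⟩
      choose JJ hJJ using hJex
      have hgval : ∀ q ∈ Gd, Φ q (∑ p, limψ hn q p ((x p):ℝ)) = w q (JJ q) :=
        fun q hq => hval x q (JJ q) (hJJ q hq)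
      have hdist : ∀ q ∈ Gd, |F (pt q (JJ q)) - F x| ≤ εF := by
        intro q hq
        have h1 : dist (pt q (JJ q)) x ≤ cc (chain hn i).m := by
          rw [dist_pi_le_iff (le_of_lt (cc_pos hm))]
          intro p
          have hmem := hJJ q hq p
          rw [Subtype.dist_eq, Real.dist_eq]
          have h2 := rA_sub_lA_le (n:=n) (m:=(chain hn i).m) (q:=(q:ℕ)) (j:=(JJ q p : ℕ)) hm
          have h3 : ((pt q (JJ q) p : ℝ)) = lA n (chain hn i).m (q:ℕ) (JJ q p :ℕ) := rfl
          rw [h3, abs_le]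
          exact ⟨by linarith [hmem.2, h2], by linarith [hmem.1, le_of_lt (cc_pos hm)]⟩
        have h4 := hδ (a := pt q (JJ q)) (b := x) (lt_of_le_of_lt h1 hcc)
        rw [Real.dist_eq] at h4
        exact le_of_lt h4
      set yy : Fin (2*n+1) → ℝ := fun q => ∑ p, limψ hn q p ((x p):ℝ) with hyy
      set Bd := Finset.univ \ Gd with hBd
      have hsplit : (∑ q ∈ Bd, Φ q (yy q)) + ∑ q ∈ Gd, Φ q (yy q) = ∑ q, Φ q (yy q) := by
        rw [hBd]
        exact Finset.sum_sdiff (Finset.subset_univ Gd)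
      set g := Gd.card with hg
      have hGsum : ∑ q ∈ Gd, Φ q (yy q)
          = (g:ℝ) * (F x/((n:ℝ)+1)) + ∑ q ∈ Gd, (F (pt q (JJ q)) - F x)/((n:ℝ)+1) := by
        calc ∑ q ∈ Gd, Φ q (yy q)
            = ∑ q ∈ Gd, (F x/((n:ℝ)+1) + (F (pt q (JJ q)) - F x)/((n:ℝ)+1)) := by
              apply Finset.sum_congr rfl
              intro q hq
              rw [hgval q hq, hw]
              simp only
              ring
          _ = _ := by
              rw [Finset.sum_add_distrib, Finset.sum_const, nsmul_eq_mul]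
      have hb1 : |∑ q ∈ Gd, (F (pt q (JJ q)) - F x)/((n:ℝ)+1)| ≤ (g:ℝ) * (εF/((n:ℝ)+1)) := by
        calc |∑ q ∈ Gd, (F (pt q (JJ q)) - F x)/((n:ℝ)+1)|
            ≤ ∑ q ∈ Gd, |(F (pt q (JJ q)) - F x)/((n:ℝ)+1)| := Finset.abs_sum_le_sum_abs _ _
          _ ≤ ∑ _q ∈ Gd, εF/((n:ℝ)+1) := by
              apply Finset.sum_le_sum
              intro q hq
              rw [abs_div, abs_of_nonneg (by positivity : (0:ℝ) ≤ (n:ℝ)+1)]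
              gcongr
              exact hdist q hq
          _ = (g:ℝ) * (εF/((n:ℝ)+1)) := by rw [Finset.sum_const, nsmul_eq_mul]
      have hBcard : Bd.card = (2*n+1) - g := by
        rw [hBd, Finset.card_sdiff_of_subset (Finset.subset_univ Gd), Finset.card_univ, Fintype.card_fin]
      have hb2 : |∑ q ∈ Bd, Φ q (yy q)| ≤ ((2*n+1) - (g:ℝ)) * (M/((n:ℝ)+1)) := by
        calc |∑ q ∈ Bd, Φ q (yy q)| ≤ ∑ q ∈ Bd, |Φ q (yy q)| := Finset.abs_sum_le_sum_abs _ _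
          _ ≤ ∑ _q ∈ Bd, M/((n:ℝ)+1) := Finset.sum_le_sum (fun q _ => hΦb q (yy q))
          _ = ((Bd.card : ℝ)) * (M/((n:ℝ)+1)) := by rw [Finset.sum_const, nsmul_eq_mul]
          _ = ((2*n+1) - (g:ℝ)) * (M/((n:ℝ)+1)) := by
              rw [hBcard]
              congr 1
              have hgle' : g ≤ 2*n+1 := hcard_le
              push_cast [Nat.cast_sub hgle']
              ring
      have hb0 : |F x - (g:ℝ)*(F x/((n:ℝ)+1))| ≤ ((g:ℝ) - ((n:ℝ)+1))/((n:ℝ)+1) * M := by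
        have he : F x - (g:ℝ)*(F x/((n:ℝ)+1)) = F x * ((((n:ℝ)+1) - (g:ℝ))/((n:ℝ)+1)) := by
          field_simp
        have hgle : (n:ℝ)+1 ≤ (g:ℝ) := by exact_mod_cast hgood
        rw [he, abs_mul, abs_div, abs_of_nonneg (by positivity : (0:ℝ) ≤ (n:ℝ)+1)]
        rw [abs_of_nonpos (by linarith : ((n:ℝ)+1) - (g:ℝ) ≤ 0)]
        rw [show -(((n:ℝ)+1) - (g:ℝ)) = (g:ℝ) - ((n:ℝ)+1) from by ring, mul_comm]
        apply mul_le_mul_of_nonneg_left (F.norm_coe_le_norm x)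
        apply div_nonneg (by linarith) (by positivity)
      have hFx : |F x| ≤ M := F.norm_coe_le_norm x
      have hgle : (n:ℝ)+1 ≤ (g:ℝ) := by exact_mod_cast hgood
      have hgle2 : (g:ℝ) ≤ 2*(n:ℝ)+1 := by exact_mod_cast hcard_le
      have hεM : εF * (8*(n:ℝ)+4) = M := by
        rw [hεF]
        field_simp
      calc |F x - ∑ q, Φ q (yy q)|
          = |(F x - (g:ℝ)*(F x/((n:ℝ)+1)))
              - (∑ q ∈ Gd, (F (pt q (JJ q)) - F x)/((n:ℝ)+1)) - (∑ q ∈ Bd, Φ q (yy q))| := by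
            rw [← hsplit, hGsum]
            congr 1
            ring
        _ ≤ |F x - (g:ℝ)*(F x/((n:ℝ)+1))| + |∑ q ∈ Gd, (F (pt q (JJ q)) - F x)/((n:ℝ)+1)|
              + |∑ q ∈ Bd, Φ q (yy q)| := by
            have t1 := abs_sub (F x - (g:ℝ)*(F x/((n:ℝ)+1))
              - (∑ q ∈ Gd, (F (pt q (JJ q)) - F x)/((n:ℝ)+1))) (∑ q ∈ Bd, Φ q (yy q))
            have t2 := abs_sub (F x - (g:ℝ)*(F x/((n:ℝ)+1)))
              (∑ q ∈ Gd, (F (pt q (JJ q)) - F x)/((n:ℝ)+1))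
            linarith
        _ ≤ ((g:ℝ) - ((n:ℝ)+1))/((n:ℝ)+1) * M + (g:ℝ) * (εF/((n:ℝ)+1))
              + ((2*n+1) - (g:ℝ)) * (M/((n:ℝ)+1)) := by
            exact add_le_add (add_le_add hb0 hb1) hb2
        _ ≤ (4*(n:ℝ)+1)/(4*(n:ℝ)+4) * M := by
            have hn1 : (0:ℝ) < (n:ℝ)+1 := by positivity
            have key : (((g:ℝ) - ((n:ℝ)+1))/((n:ℝ)+1)) * M + (g:ℝ) * (εF/((n:ℝ)+1))
                + ((2*(n:ℝ)+1) - (g:ℝ)) * (M/((n:ℝ)+1))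
                = ((((g:ℝ) - ((n:ℝ)+1)) * M + (g:ℝ) * εF + ((2*(n:ℝ)+1) - (g:ℝ)) * M))/((n:ℝ)+1) := by
              field_simp
            rw [key, div_le_iff₀ hn1]
            have h41 : (4*(n:ℝ)+1)/(4*(n:ℝ)+4) * M * ((n:ℝ)+1) = (4*(n:ℝ)+1) * M / 4 := by
              rw [div_mul_eq_mul_div, div_mul_eq_mul_div]
              rw [div_eq_div_iff (by positivity) (by norm_num)]
              ring
            rw [h41, le_div_iff₀ (by norm_num : (0:ℝ) < 4)]
            have hge := mul_le_mul_of_nonneg_right hgle2 (le_of_lt hεFpos)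
            nlinarith [hεM, hM0]

/-! ### the outer iteration -/

noncomputable def stepPhi (hn : 1 ≤ n) (F : C((Fin n → Icc (0:ℝ) 1), ℝ)) : Fin (2*n+1) → ℝ → ℝ :=
  Classical.choose (outer_step hn F)

lemma stepPhi_spec (hn : 1 ≤ n) (F : C((Fin n → Icc (0:ℝ) 1), ℝ)) :
    (∀ q, Continuous (stepPhi hn F q)) ∧
      (∀ q y, |stepPhi hn F q y| ≤ ‖F‖/((n:ℝ)+1)) ∧
      (∀ x, |F x - ∑ q, stepPhi hn F q (∑ p, limψ hn q p ((x p):ℝ))|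
        ≤ (4*(n:ℝ)+1)/(4*(n:ℝ)+4) * ‖F‖) :=
  Classical.choose_spec (outer_step hn F)

noncomputable def Fseq (hn : 1 ≤ n) (f : C((Fin n → Icc (0:ℝ) 1), ℝ)) :
    ℕ → C((Fin n → Icc (0:ℝ) 1), ℝ)
  | 0 => f
  | (k+1) => Fseq hn f k -
      ⟨fun x => ∑ q, stepPhi hn (Fseq hn f k) q (∑ p, limψ hn q p ((x p):ℝ)), by
        apply continuous_finset_sum
        intro q _
        apply ((stepPhi_spec hn (Fseq hn f k)).1 q).comp
        apply continuous_finset_sum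
        intro p _
        exact (limψ_cont hn q p).comp (continuous_subtype_val.comp (continuous_apply p))⟩

lemma Fseq_succ_apply (hn : 1 ≤ n) (f : C((Fin n → Icc (0:ℝ) 1), ℝ)) (k : ℕ)
    (x : Fin n → Icc (0:ℝ) 1) :
    Fseq hn f (k+1) x = Fseq hn f k x
      - ∑ q, stepPhi hn (Fseq hn f k) q (∑ p, limψ hn q p ((x p):ℝ)) := by
  rw [Fseq]
  simp [ContinuousMap.sub_apply]

lemma Fseq_norm (hn : 1 ≤ n) (f : C((Fin n → Icc (0:ℝ) 1), ℝ)) (k : ℕ) :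
    ‖Fseq hn f k‖ ≤ ((4*(n:ℝ)+1)/(4*(n:ℝ)+4))^k * ‖f‖ := by
  induction k with
  | zero => simp [Fseq]
  | succ k ih =>
    have hθ0 : (0:ℝ) ≤ (4*(n:ℝ)+1)/(4*(n:ℝ)+4) := by positivity
    have hstep : ‖Fseq hn f (k+1)‖ ≤ (4*(n:ℝ)+1)/(4*(n:ℝ)+4) * ‖Fseq hn f k‖ := by
      rw [ContinuousMap.norm_le _ (by positivity)]
      intro x
      rw [Real.norm_eq_abs, Fseq_succ_apply]
      exact (stepPhi_spec hn (Fseq hn f k)).2.2 x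
    calc ‖Fseq hn f (k+1)‖ ≤ (4*(n:ℝ)+1)/(4*(n:ℝ)+4) * ‖Fseq hn f k‖ := hstep
      _ ≤ (4*(n:ℝ)+1)/(4*(n:ℝ)+4) * (((4*(n:ℝ)+1)/(4*(n:ℝ)+4))^k * ‖f‖) :=
          mul_le_mul_of_nonneg_left ih hθ0
      _ = ((4*(n:ℝ)+1)/(4*(n:ℝ)+4))^(k+1) * ‖f‖ := by ring

lemma theta_lt_one (n : ℕ) : (4*(n:ℝ)+1)/(4*(n:ℝ)+4) < 1 := by
  rw [div_lt_one (by positivity)]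
  linarith [Nat.cast_nonneg (α := ℝ) n]

/-- the Kolmogorov-Arnold theorem, internal form -/
theorem main (hn : 1 ≤ n) (f : (Fin n → Icc (0:ℝ) 1) → ℝ) (hf : Continuous f) :
    ∃ (Φ : Fin (2 * n + 1) → ℝ → ℝ)
      (φ : Fin (2 * n + 1) → Fin n → Icc (0 : ℝ) 1 → ℝ),
      (∀ q, Continuous (Φ q)) ∧ (∀ q p, Continuous (φ q p)) ∧
      ∀ x : Fin n → Icc (0 : ℝ) 1,
        f x = ∑ q, Φ q (∑ p, φ q p (x p)) := by
  set f' : C((Fin n → Icc (0:ℝ) 1), ℝ) := ⟨f, hf⟩ with hf'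
  set θ : ℝ := (4*(n:ℝ)+1)/(4*(n:ℝ)+4) with hθ
  have hθ0 : 0 ≤ θ := by rw [hθ]; positivity
  have hθ1 : θ < 1 := theta_lt_one n
  have hbound : ∀ k (q : Fin (2*n+1)) y, |stepPhi hn (Fseq hn f' k) q y| ≤ θ^k * (‖f'‖/((n:ℝ)+1)) := by
    intro k q y
    calc |stepPhi hn (Fseq hn f' k) q y| ≤ ‖Fseq hn f' k‖/((n:ℝ)+1) :=
          (stepPhi_spec hn (Fseq hn f' k)).2.1 q y
      _ ≤ (θ^k * ‖f'‖)/((n:ℝ)+1) := by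
          gcongr
          exact Fseq_norm hn f' k
      _ = θ^k * (‖f'‖/((n:ℝ)+1)) := by ring
  have hsummable : Summable (fun k => θ^k * (‖f'‖/((n:ℝ)+1))) :=
    (summable_geometric_of_lt_one hθ0 hθ1).mul_right _
  refine ⟨fun q y => ∑' k, stepPhi hn (Fseq hn f' k) q y,
    fun q p t => limψ hn q p (t:ℝ), ?_, ?_, ?_⟩
  · intro q
    apply continuous_tsum _ hsummable
    · intro k y
      rw [Real.norm_eq_abs]
      exact hbound k q y
    · intro k
      exact (stepPhi_spec hn (Fseq hn f' k)).1 q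
  · intro q p
    exact (limψ_cont hn q p).comp continuous_subtype_val
  · intro x
    have hsq : ∀ q : Fin (2*n+1), Summable (fun k => stepPhi hn (Fseq hn f' k) q (∑ p, limψ hn q p ((x p):ℝ))) := by
      intro q
      apply Summable.of_norm_bounded hsummable
      intro k
      rw [Real.norm_eq_abs]
      exact hbound k q _
    have hswap : ∑ q, ∑' k, stepPhi hn (Fseq hn f' k) q (∑ p, limψ hn q p ((x p):ℝ))
        = ∑' k, ∑ q, stepPhi hn (Fseq hn f' k) q (∑ p, limψ hn q p ((x p):ℝ)) :=
      (Summable.tsum_finsetSum (fun q _ => hsq q)).symm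
    have htel : ∀ k, ∑ q, stepPhi hn (Fseq hn f' k) q (∑ p, limψ hn q p ((x p):ℝ))
        = Fseq hn f' k x - Fseq hn f' (k+1) x := by
      intro k
      rw [Fseq_succ_apply]
      ring
    have hFk : ∀ k, |Fseq hn f' k x| ≤ θ^k * ‖f'‖ := by
      intro k
      calc |Fseq hn f' k x| ≤ ‖Fseq hn f' k‖ := (Fseq hn f' k).norm_coe_le_norm x
        _ ≤ θ^k * ‖f'‖ := Fseq_norm hn f' k
    have hlim : Filter.Tendsto (fun k => Fseq hn f' k x) Filter.atTop (nhds 0) := by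
      apply squeeze_zero_norm (fun k => by simpa [Real.norm_eq_abs] using hFk k)
      have h1 : Filter.Tendsto (fun k : ℕ => θ^k) Filter.atTop (nhds 0) :=
        tendsto_pow_atTop_nhds_zero_of_lt_one hθ0 hθ1
      have h2 := h1.mul_const ‖f'‖
      simpa using h2
    have hS : Summable (fun k => ∑ q, stepPhi hn (Fseq hn f' k) q (∑ p, limψ hn q p ((x p):ℝ))) := by
      apply Summable.of_norm_bounded (g := fun k => θ^k * ((2*(n:ℝ)+1) * (‖f'‖/((n:ℝ)+1))))
      · exact (summable_geometric_of_lt_one hθ0 hθ1).mul_right _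
      · intro k
        rw [Real.norm_eq_abs]
        calc |∑ q, stepPhi hn (Fseq hn f' k) q (∑ p, limψ hn q p ((x p):ℝ))|
            ≤ ∑ q : Fin (2*n+1), |stepPhi hn (Fseq hn f' k) q (∑ p, limψ hn q p ((x p):ℝ))| :=
              Finset.abs_sum_le_sum_abs _ _
          _ ≤ ∑ _q : Fin (2*n+1), θ^k * (‖f'‖/((n:ℝ)+1)) :=
              Finset.sum_le_sum (fun q _ => hbound k q _)
          _ = θ^k * ((2*(n:ℝ)+1) * (‖f'‖/((n:ℝ)+1))) := by
              rw [Finset.sum_const, Finset.card_univ, Fintype.card_fin, nsmul_eq_mul]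
              push_cast
              ring
    have htsum : ∑' k, ∑ q, stepPhi hn (Fseq hn f' k) q (∑ p, limψ hn q p ((x p):ℝ)) = f x := by
      have h1 := hS.hasSum.tendsto_sum_nat
      have h2 : ∀ K, ∑ k ∈ Finset.range K, ∑ q, stepPhi hn (Fseq hn f' k) q (∑ p, limψ hn q p ((x p):ℝ))
          = f' x - Fseq hn f' K x := by
        intro K
        rw [Finset.sum_congr rfl (fun k _ => htel k), Finset.sum_range_sub' (fun k => Fseq hn f' k x)]
        rfl
      simp only [h2] at h1
      have h3 : Filter.Tendsto (fun K => f' x - Fseq hn f' K x) Filter.atTop (nhds (f' x - 0)) :=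
        tendsto_const_nhds.sub hlim
      rw [sub_zero] at h3
      have h4 := tendsto_nhds_unique h1 h3
      rw [h4]
      rfl
    rw [← htsum, ← hswap]
end

end KA

/-- Kolmogorov–Arnold representation theorem. -/
theorem kolmogorov_arnold (n : ℕ) (hn : 1 ≤ n)
    (f : (Fin n → Set.Icc (0 : ℝ) 1) → ℝ) (hf : Continuous f) :
    ∃ (Φ : Fin (2 * n + 1) → ℝ → ℝ)
      (φ : Fin (2 * n + 1) → Fin n → Set.Icc (0 : ℝ) 1 → ℝ),
      (∀ q, Continuous (Φ q)) ∧ (∀ q p, Continuous (φ q p)) ∧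
      ∀ x : Fin n → Set.Icc (0 : ℝ) 1,
        f x = ∑ q, Φ q (∑ p, φ q p (x p)) :=
  KA.main hn f hf
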